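/- Let σ be a closed strongly convex cone in a finite-dimensional real vector space V. Then the relative interior of the dual cone σ∨ equals the set of φ ∈ σ∨ such that φ(x) > 0 for all nonzero x ∈ σ. -/

import Mathlib

open RealInnerProductSpace Set

private theorem intrinsic_eq_interior {V : Type*} [NormedAddCommGroup V]
    [InnerProductSpace ℝ V] (s : Set V) (h : affineSpan ℝ s = ⊤) :
    intrinsicInterior ℝ s = interior s := by
  apply subset_antisymm _ (interior_subset_intrinsicInterior (𝕜 := ℝ) (s := s))
  rintro x ⟨y, hy, rfl⟩
  have hopen : IsOpenMap ((↑) : affineSpan ℝ s → V) := by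
    have h1 : IsOpen ((affineSpan ℝ s : Set V)) := by
      rw [h, AffineSubspace.top_coe]; exact isOpen_univ
    exact h1.isOpenMap_subtype_val
  have h2 := hopen.image_interior_subset _ (mem_image_of_mem _ hy)
  exact interior_mono (image_preimage_subset _ _) h2

theorem intrinsicInterior_dualCone {V : Type*} [NormedAddCommGroup V] [InnerProductSpace ℝ V]
    [FiniteDimensional ℝ V] (σ : Set V) (hclosed : IsClosed σ)
    (hcone : ∀ x ∈ σ, ∀ t : ℝ, 0 < t → t • x ∈ σ) (hconv : Convex ℝ σ)
    (hstrong : ∀ x ∈ σ, -x ∈ σ → x = 0) :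
    intrinsicInterior ℝ {y : V | ∀ x ∈ σ, 0 ≤ ⟪y, x⟫} =
      {y : V | (∀ x ∈ σ, 0 ≤ ⟪y, x⟫) ∧ ∀ x ∈ σ, x ≠ 0 → 0 < ⟪y, x⟫} := by
  set D : Set V := {y : V | ∀ x ∈ σ, 0 ≤ ⟪y, x⟫} with hDdef
  -- Step A: affineSpan ℝ D = ⊤
  have hspan : affineSpan ℝ D = ⊤ := by
    rcases σ.eq_empty_or_nonempty with rfl | ⟨x₀, hx₀⟩
    · have : D = univ := by ext y; simp [hDdef]
      rw [this]
      exact eq_top_iff.2 fun v _ => subset_affineSpan ℝ _ (mem_univ v)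
    · -- 0 ∈ σ
      have h0σ : (0 : V) ∈ σ := by
        have htend : Filter.Tendsto (fun n : ℕ => ((n : ℝ) + 1)⁻¹ • x₀)
            Filter.atTop (nhds 0) := by
          have := (tendsto_one_div_add_atTop_nhds_zero_nat (𝕜 := ℝ)).smul_const x₀
          simpa [one_div, zero_smul] using this
        exact hclosed.mem_of_tendsto htend
          (Filter.Eventually.of_forall fun n =>
            hcone x₀ hx₀ _ (by positivity))
      -- σ as a convex cone
      let K : ConvexCone ℝ V :=
        { carrier := σ
          smul_mem' := fun c hc x hx => hcone x hx c hc
          add_mem' := fun x hx y hy => by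
            have h1 : (1/2 : ℝ) • x + (1/2 : ℝ) • y ∈ σ :=
              hconv hx hy (by norm_num) (by norm_num) (by norm_num)
            have h2 := hcone _ h1 2 (by norm_num)
            have : (2:ℝ) • ((1/2 : ℝ) • x + (1/2 : ℝ) • y) = x + y := by
              rw [smul_add, smul_smul, smul_smul]; norm_num
            rwa [this] at h2 }
      let C : ProperCone ℝ V :=
        { carrier := σ
          add_mem' := fun hx hy => K.add_mem hx hy
          zero_mem' := h0σ
          smul_mem' := fun c x hx => by
            rcases eq_or_lt_of_le c.2 with hc | hc
            · have : c = 0 := NNReal.coe_eq_zero.1 hc.symm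
              subst this; simpa using h0σ
            · exact hcone x hx _ hc
          isClosed' := hclosed }
      have hDK : ∀ v : V, (∀ x ∈ D, 0 ≤ ⟪x, v⟫) → v ∈ K := by
        intro v hv
        by_contra hvn
        obtain ⟨w, hw, hwv⟩ := C.hyperplane_separation' (x₀ := v) hvn
        have hwD : w ∈ D := fun x hx => by rw [real_inner_comm]; exact hw x hx
        have := hv w hwD
        rw [real_inner_comm] at this
        linarith
      have h0D : (0 : V) ∈ D := fun x hx => by simp
      have hspanD : Submodule.span ℝ D = ⊤ := by
        rw [← Submodule.orthogonal_eq_bot_iff]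
        rw [Submodule.eq_bot_iff]
        intro v hv
        have hv' : ∀ x ∈ D, ⟪x, v⟫ = 0 := fun x hx =>
          hv x (Submodule.subset_span hx)
        have hvK : v ∈ K := by
          apply hDK
          exact fun x hx => le_of_eq (hv' x hx).symm
        have hvK' : -v ∈ K := by
          apply hDK
          intro x hx
          rw [inner_neg_right, hv' x hx, neg_zero]
        exact hstrong v hvK hvK'
      rw [AffineSubspace.affineSpan_eq_top_iff_vectorSpan_eq_top_of_nonempty ℝ V V ⟨0, h0D⟩]
      rw [← top_le_iff, ← hspanD, vectorSpan_def]
      exact Submodule.span_mono fun x hx => ⟨x, hx, 0, h0D, by simp⟩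
  rw [intrinsic_eq_interior _ hspan]
  apply subset_antisymm
  · intro y hy
    refine ⟨interior_subset hy, fun x hx hxne => ?_⟩
    obtain ⟨ε, hε, hball⟩ := Metric.isOpen_iff.1 isOpen_interior y hy
    have hxnorm : (0:ℝ) < ‖x‖ := norm_pos_iff.2 hxne
    set z : V := y - (ε / (2 * ‖x‖)) • x with hz
    have hzball : z ∈ Metric.ball y ε := by
      rw [Metric.mem_ball, dist_eq_norm, hz]
      simp only [sub_sub_cancel_left, norm_neg, norm_smul, Real.norm_eq_abs]
      rw [abs_of_pos (by positivity)]
      rw [div_mul_eq_mul_div, div_lt_iff₀ (by positivity)]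
      nlinarith
    have hzD : z ∈ D := interior_subset (hball hzball)
    have := hzD x hx
    rw [hz, inner_sub_left, real_inner_smul_left, real_inner_self_eq_norm_sq] at this
    have h2 : ε / (2 * ‖x‖) * ‖x‖ ^ 2 = ε * ‖x‖ / 2 := by
      field_simp
    nlinarith [this, h2]
  · rintro y ⟨hyD, hypos⟩
    rcases (σ ∩ Metric.sphere 0 1).eq_empty_or_nonempty with hK | ⟨x₁, hx₁⟩
    · -- σ ⊆ {0}, so D = univ
      have hσ0 : ∀ x ∈ σ, x = 0 := by
        intro x hx
        by_contra hxne
        have hxn : (0:ℝ) < ‖x‖ := norm_pos_iff.2 hxne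
        have : ‖x‖⁻¹ • x ∈ σ ∩ Metric.sphere 0 1 := by
          refine ⟨hcone x hx _ (by positivity), ?_⟩
          simp [norm_smul, abs_of_pos (inv_pos.2 hxn), inv_mul_cancel₀ hxn.ne']
        rw [hK] at this; exact this
      have : D = univ := by
        ext w; simp only [hDdef, mem_setOf_eq, mem_univ, iff_true]
        intro x hx; rw [hσ0 x hx]; simp
      rw [this, interior_univ]; trivial
    · have hKc : IsCompact (σ ∩ Metric.sphere 0 1) :=
        (isCompact_sphere 0 1).inter_left hclosed
      obtain ⟨x₀, hx₀K, hx₀min⟩ := hKc.exists_isMinOn ⟨x₁, hx₁⟩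
        ((continuous_const.inner continuous_id).continuousOn :
          ContinuousOn (fun x => ⟪y, x⟫) _)
      set m : ℝ := ⟪y, x₀⟫ with hm
      have hx₀ne : x₀ ≠ 0 := by
        intro h; rw [h] at hx₀K
        have := hx₀K.2; simp at this
      have hmpos : 0 < m := hypos x₀ hx₀K.1 hx₀ne
      apply mem_interior.2 ⟨Metric.ball y m, ?_, Metric.isOpen_ball, Metric.mem_ball_self hmpos⟩
      intro z hz x hx
      rcases eq_or_ne x 0 with rfl | hxne
      · simp
      · have hxn : (0:ℝ) < ‖x‖ := norm_pos_iff.2 hxne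
        set u : V := ‖x‖⁻¹ • x with hu
        have huK : u ∈ σ ∩ Metric.sphere 0 1 := by
          refine ⟨hcone x hx _ (by positivity), ?_⟩
          simp [hu, norm_smul, abs_of_pos (inv_pos.2 hxn), inv_mul_cancel₀ hxn.ne']
        have hyu : m ≤ ⟪y, u⟫ := hx₀min huK
        have hzu : |⟪z - y, u⟫| ≤ ‖z - y‖ * ‖u‖ := abs_real_inner_le_norm _ _
        have hunorm : ‖u‖ = 1 := mem_sphere_zero_iff_norm.1 huK.2
        have hdist : ‖z - y‖ < m := by
          rw [← dist_eq_norm]; exact Metric.mem_ball.1 hz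
        have hzu' : 0 < ⟪z, u⟫ := by
          have hsplit : ⟪z, u⟫ = ⟪y, u⟫ + ⟪z - y, u⟫ := by
            rw [inner_sub_left]; ring
          rw [hunorm, mul_one] at hzu
          have hlow := neg_abs_le (⟪z - y, u⟫ : ℝ)
          rw [hsplit]
          linarith
        have : ⟪z, x⟫ = ‖x‖ * ⟪z, u⟫ := by
          rw [hu, real_inner_smul_right]
          field_simp
        rw [this]
        positivity
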